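/- Let M be a left 𝕆-module and m ∈ M. Then the submodule ⟨m⟩_𝕆 generated by m is finite-dimensional over ℝ; more precisely, dim_ℝ ⟨m⟩_𝕆 ≤ 128. -/

import Mathlib

noncomputable section

open scoped Quaternion

/-- The octonions, realized as pairs of quaternions via the Cayley–Dickson construction. -/
def Octo : Type := ℍ[ℝ] × ℍ[ℝ]

namespace Octo

instance : AddCommGroup Octo := inferInstanceAs (AddCommGroup (ℍ[ℝ] × ℍ[ℝ]))
instance : Module ℝ Octo := inferInstanceAs (Module ℝ (ℍ[ℝ] × ℍ[ℝ]))

/-- Build an octonion from a pair of quaternions. -/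
def mk (a b : ℍ[ℝ]) : Octo := (a, b)

/-- First quaternion component. -/
def p1 (x : Octo) : ℍ[ℝ] := (show ℍ[ℝ] × ℍ[ℝ] from x).1

/-- Second quaternion component. -/
def p2 (x : Octo) : ℍ[ℝ] := (show ℍ[ℝ] × ℍ[ℝ] from x).2

/-- Cayley–Dickson multiplication: `(a,b)(c,d) = (ac − d̄b, da + bc̄)`. -/
instance : Mul Octo :=
  ⟨fun x y => mk (p1 x * p1 y - star (p2 y) * p2 x) (p2 y * p1 x + p2 x * star (p1 y))⟩

instance : One Octo := ⟨mk 1 0⟩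

/-- Octonion conjugation: for `x = (a,b)`, `x̄ = (ā, −b)`. -/
def conj (x : Octo) : Octo := mk (star (p1 x)) (-(p2 x))

/-- The octonion associator `[x,y,z] = (xy)z − x(yz)`. -/
def assoc (x y z : Octo) : Octo := x * y * z - x * (y * z)

/-- The octonion commutator `[x,y] = xy − yx`. -/
def comm (x y : Octo) : Octo := x * y - y * x

/-- The canonical embedding of the reals into the octonions. -/
def ofReal (r : ℝ) : Octo := r • (1 : Octo)

end Octo

section OMod

variable {M : Type*} [AddCommGroup M] [Module ℝ M]
variable {N : Type*} [AddCommGroup N] [Module ℝ N]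

/-- `IsOMod sm` says that the scalar multiplication `sm : 𝕆 × M → M` makes the real vector
space `M` a left 𝕆-module: `sm` is ℝ-bilinear, unital, and the left associator is
alternating in its two octonion arguments. -/
structure IsOMod (sm : Octo → M → M) : Prop where
  smul_add : ∀ (p : Octo) (m n : M), sm p (m + n) = sm p m + sm p n
  add_smul : ∀ (p q : Octo) (m : M), sm (p + q) m = sm p m + sm q m
  real_smul : ∀ (r : ℝ) (p : Octo) (m : M), sm (r • p) m = r • sm p m
  smul_real : ∀ (r : ℝ) (p : Octo) (m : M), sm p (r • m) = r • sm p m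
  one_smul : ∀ m : M, sm 1 m = m
  alt : ∀ (p q : Octo) (m : M),
    sm (p * q) m - sm p (sm q m) = -(sm (q * p) m - sm q (sm p m))

/-- The left associator `[p,q,m] = (pq)m − p(qm)`. -/
def oLassoc (sm : Octo → M → M) (p q : Octo) (m : M) : M :=
  sm (p * q) m - sm p (sm q m)

/-- The set `𝒜(M)` of associative elements: `[p,q,m] = 0` for all `p,q ∈ 𝕆`. -/
def assocSet (sm : Octo → M → M) : Set M :=
  {m | ∀ p q : Octo, oLassoc sm p q m = 0}

/-- The set `𝒜⁻(M)` of conjugate associative elements: `(pq)m = q(pm)` for all `p,q ∈ 𝕆`. -/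
def conjAssocSet (sm : Octo → M → M) : Set M :=
  {m | ∀ p q : Octo, sm (p * q) m = sm q (sm p m)}

/-- A homomorphism of left 𝕆-modules: an ℝ-linear map commuting with 𝕆-scalar
multiplication. -/
def IsOHom (sm : Octo → M → M) (sm' : Octo → N → N) (f : M → N) : Prop :=
  IsLinearMap ℝ f ∧ ∀ (p : Octo) (m : M), f (sm p m) = sm' p (f m)

/-- Two left 𝕆-modules are isomorphic if there is a bijective homomorphism between them. -/
def OIso (sm : Octo → M → M) (sm' : Octo → N → N) : Prop :=
  ∃ f : M → N, IsOHom sm sm' f ∧ Function.Bijective f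

/-- A submodule: a real subspace closed under 𝕆-scalar multiplication. -/
structure IsOSubmodule (sm : Octo → M → M) (S : Set M) : Prop where
  zero_mem : (0 : M) ∈ S
  add_mem : ∀ {x y : M}, x ∈ S → y ∈ S → x + y ∈ S
  smul_mem : ∀ (r : ℝ) {x : M}, x ∈ S → r • x ∈ S
  osmul_mem : ∀ (p : Octo) {x : M}, x ∈ S → sm p x ∈ S

/-- `⟨m⟩_𝕆`, the smallest submodule containing `m`, as a set. -/
def genSet (sm : Octo → M → M) (m : M) : Set M :=
  ⋂₀ {S : Set M | IsOSubmodule sm S ∧ m ∈ S}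

/-- An element `m` is cyclic if `⟨m⟩_𝕆 = 𝕆m`. -/
def IsOCyclic (sm : Octo → M → M) (m : M) : Prop :=
  genSet sm m = {x | ∃ p : Octo, x = sm p m}

/-- 𝕆-linear independence of a subset `S ⊆ M`: any finite 𝕆-linear combination of
distinct elements of `S` that vanishes has all coefficients zero. -/
def OLinIndep (sm : Octo → M → M) (S : Set M) : Prop :=
  ∀ (n : ℕ) (s : Fin n → M) (r : Fin n → Octo), Function.Injective s → (∀ i, s i ∈ S) →
    (∑ i, sm (r i) (s i)) = 0 → ∀ i, r i = 0

end OMod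

/-- The canonical left 𝕆-module structure on 𝕆 itself. -/
def oSmul : Octo → Octo → Octo := fun p x => p * x

/-- The left 𝕆-module structure `𝕆̄` on 𝕆: `p ·̂ x = p̄x`. -/
def oBarSmul : Octo → Octo → Octo := fun p x => Octo.conj p * x

/-- `⟨m⟩_𝕆` as a real subspace of `M`. -/
def genSubmodule {M : Type*} [AddCommGroup M] [Module ℝ M]
    (sm : Octo → M → M) (m : M) : Submodule ℝ M where
  carrier := genSet sm m
  zero_mem' := Set.mem_sInter.mpr fun _ hS => hS.1.zero_mem
  add_mem' := fun ha hb => Set.mem_sInter.mpr fun S hS =>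
    hS.1.add_mem (Set.mem_sInter.mp ha S hS) (Set.mem_sInter.mp hb S hS)
  smul_mem' := fun r _ hx => Set.mem_sInter.mpr fun S hS =>
    hS.1.smul_mem r (Set.mem_sInter.mp hx S hS)

namespace Stmt16Aux
open Octo

lemma mul_def (x y : Octo) : x * y =
    Octo.mk (p1 x * p1 y - star (p2 y) * p2 x) (p2 y * p1 x + p2 x * star (p1 y)) := rfl
lemma ext_octo {x y : Octo} (h1 : p1 x = p1 y) (h2 : p2 x = p2 y) : x = y :=
  Prod.ext h1 h2

def qq (a b c d : ℝ) : ℍ[ℝ] := ⟨a, b, c, d⟩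
@[simp] lemma qq_re (a b c d : ℝ) : (qq a b c d).re = a := rfl
@[simp] lemma qq_imI (a b c d : ℝ) : (qq a b c d).imI = b := rfl
@[simp] lemma qq_imJ (a b c d : ℝ) : (qq a b c d).imJ = c := rfl
@[simp] lemma qq_imK (a b c d : ℝ) : (qq a b c d).imK = d := rfl

def E : Fin 8 → Octo :=
  ![Octo.mk (qq 1 0 0 0) (qq 0 0 0 0), Octo.mk (qq 0 1 0 0) (qq 0 0 0 0), Octo.mk (qq 0 0 1 0) (qq 0 0 0 0),
    Octo.mk (qq 0 0 0 1) (qq 0 0 0 0), Octo.mk (qq 0 0 0 0) (qq 1 0 0 0), Octo.mk (qq 0 0 0 0) (qq 0 1 0 0),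
    Octo.mk (qq 0 0 0 0) (qq 0 0 1 0), Octo.mk (qq 0 0 0 0) (qq 0 0 0 1)]

lemma p1_add (x y : Octo) : p1 (x + y) = p1 x + p1 y := rfl
lemma p2_add (x y : Octo) : p2 (x + y) = p2 x + p2 y := rfl
lemma p1_smul (r : ℝ) (x : Octo) : p1 (r • x) = r • p1 x := rfl
lemma p2_smul (r : ℝ) (x : Octo) : p2 (r • x) = r • p2 x := rfl
lemma p1_mk (a b : ℍ[ℝ]) : p1 (Octo.mk a b) = a := rfl
lemma p2_mk (a b : ℍ[ℝ]) : p2 (Octo.mk a b) = b := rfl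
lemma p1_one : p1 (1 : Octo) = 1 := rfl
lemma p2_one : p2 (1 : Octo) = 0 := rfl
lemma p1_zero : p1 (0 : Octo) = 0 := rfl
lemma p2_zero : p2 (0 : Octo) = 0 := rfl

lemma eR_1 : E 1 = Octo.mk (qq 0 1 0 0) (qq 0 0 0 0) := rfl

lemma eR_2 : E 2 = Octo.mk (qq 0 0 1 0) (qq 0 0 0 0) := rfl

lemma eR_3 : E 3 = Octo.mk (qq 0 0 0 1) (qq 0 0 0 0) := rfl

lemma eR_4 : E 4 = Octo.mk (qq 0 0 0 0) (qq 1 0 0 0) := rfl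

lemma eR_5 : E 5 = Octo.mk (qq 0 0 0 0) (qq 0 1 0 0) := rfl

lemma eR_6 : E 6 = Octo.mk (qq 0 0 0 0) (qq 0 0 1 0) := rfl

lemma eR_7 : E 7 = Octo.mk (qq 0 0 0 0) (qq 0 0 0 1) := rfl

lemma sq_1 : E 1 * E 1 = (-1 : ℝ) • (1 : Octo) := by
  apply ext_octo <;>
  · rw [eR_1]
    simp only [mul_def, p1_mk, p2_mk, p1_smul, p2_smul, p1_one, p2_one]
    ext <;> simp [Quaternion.re_mul, Quaternion.imI_mul, Quaternion.imJ_mul, Quaternion.imK_mul]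

lemma sq_2 : E 2 * E 2 = (-1 : ℝ) • (1 : Octo) := by
  apply ext_octo <;>
  · rw [eR_2]
    simp only [mul_def, p1_mk, p2_mk, p1_smul, p2_smul, p1_one, p2_one]
    ext <;> simp [Quaternion.re_mul, Quaternion.imI_mul, Quaternion.imJ_mul, Quaternion.imK_mul]

lemma sq_3 : E 3 * E 3 = (-1 : ℝ) • (1 : Octo) := by
  apply ext_octo <;>
  · rw [eR_3]
    simp only [mul_def, p1_mk, p2_mk, p1_smul, p2_smul, p1_one, p2_one]
    ext <;> simp [Quaternion.re_mul, Quaternion.imI_mul, Quaternion.imJ_mul, Quaternion.imK_mul]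

lemma sq_4 : E 4 * E 4 = (-1 : ℝ) • (1 : Octo) := by
  apply ext_octo <;>
  · rw [eR_4]
    simp only [mul_def, p1_mk, p2_mk, p1_smul, p2_smul, p1_one, p2_one]
    ext <;> simp [Quaternion.re_mul, Quaternion.imI_mul, Quaternion.imJ_mul, Quaternion.imK_mul]

lemma sq_5 : E 5 * E 5 = (-1 : ℝ) • (1 : Octo) := by
  apply ext_octo <;>
  · rw [eR_5]
    simp only [mul_def, p1_mk, p2_mk, p1_smul, p2_smul, p1_one, p2_one]
    ext <;> simp [Quaternion.re_mul, Quaternion.imI_mul, Quaternion.imJ_mul, Quaternion.imK_mul]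

lemma sq_6 : E 6 * E 6 = (-1 : ℝ) • (1 : Octo) := by
  apply ext_octo <;>
  · rw [eR_6]
    simp only [mul_def, p1_mk, p2_mk, p1_smul, p2_smul, p1_one, p2_one]
    ext <;> simp [Quaternion.re_mul, Quaternion.imI_mul, Quaternion.imJ_mul, Quaternion.imK_mul]

lemma sq_7 : E 7 * E 7 = (-1 : ℝ) • (1 : Octo) := by
  apply ext_octo <;>
  · rw [eR_7]
    simp only [mul_def, p1_mk, p2_mk, p1_smul, p2_smul, p1_one, p2_one]
    ext <;> simp [Quaternion.re_mul, Quaternion.imI_mul, Quaternion.imJ_mul, Quaternion.imK_mul]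

lemma anti_1_2 : E 1 * E 2 + E 2 * E 1 = 0 := by
  apply ext_octo <;>
  · rw [eR_1, eR_2]
    simp only [mul_def, p1_mk, p2_mk, p1_add, p2_add, p1_zero, p2_zero]
    ext <;> simp [Quaternion.re_mul, Quaternion.imI_mul, Quaternion.imJ_mul, Quaternion.imK_mul]

lemma anti_1_3 : E 1 * E 3 + E 3 * E 1 = 0 := by
  apply ext_octo <;>
  · rw [eR_1, eR_3]
    simp only [mul_def, p1_mk, p2_mk, p1_add, p2_add, p1_zero, p2_zero]
    ext <;> simp [Quaternion.re_mul, Quaternion.imI_mul, Quaternion.imJ_mul, Quaternion.imK_mul]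

lemma anti_1_4 : E 1 * E 4 + E 4 * E 1 = 0 := by
  apply ext_octo <;>
  · rw [eR_1, eR_4]
    simp only [mul_def, p1_mk, p2_mk, p1_add, p2_add, p1_zero, p2_zero]
    ext <;> simp [Quaternion.re_mul, Quaternion.imI_mul, Quaternion.imJ_mul, Quaternion.imK_mul]

lemma anti_1_5 : E 1 * E 5 + E 5 * E 1 = 0 := by
  apply ext_octo <;>
  · rw [eR_1, eR_5]
    simp only [mul_def, p1_mk, p2_mk, p1_add, p2_add, p1_zero, p2_zero]
    ext <;> simp [Quaternion.re_mul, Quaternion.imI_mul, Quaternion.imJ_mul, Quaternion.imK_mul]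

lemma anti_1_6 : E 1 * E 6 + E 6 * E 1 = 0 := by
  apply ext_octo <;>
  · rw [eR_1, eR_6]
    simp only [mul_def, p1_mk, p2_mk, p1_add, p2_add, p1_zero, p2_zero]
    ext <;> simp [Quaternion.re_mul, Quaternion.imI_mul, Quaternion.imJ_mul, Quaternion.imK_mul]

lemma anti_1_7 : E 1 * E 7 + E 7 * E 1 = 0 := by
  apply ext_octo <;>
  · rw [eR_1, eR_7]
    simp only [mul_def, p1_mk, p2_mk, p1_add, p2_add, p1_zero, p2_zero]
    ext <;> simp [Quaternion.re_mul, Quaternion.imI_mul, Quaternion.imJ_mul, Quaternion.imK_mul]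

lemma anti_2_3 : E 2 * E 3 + E 3 * E 2 = 0 := by
  apply ext_octo <;>
  · rw [eR_2, eR_3]
    simp only [mul_def, p1_mk, p2_mk, p1_add, p2_add, p1_zero, p2_zero]
    ext <;> simp [Quaternion.re_mul, Quaternion.imI_mul, Quaternion.imJ_mul, Quaternion.imK_mul]

lemma anti_2_4 : E 2 * E 4 + E 4 * E 2 = 0 := by
  apply ext_octo <;>
  · rw [eR_2, eR_4]
    simp only [mul_def, p1_mk, p2_mk, p1_add, p2_add, p1_zero, p2_zero]
    ext <;> simp [Quaternion.re_mul, Quaternion.imI_mul, Quaternion.imJ_mul, Quaternion.imK_mul]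

lemma anti_2_5 : E 2 * E 5 + E 5 * E 2 = 0 := by
  apply ext_octo <;>
  · rw [eR_2, eR_5]
    simp only [mul_def, p1_mk, p2_mk, p1_add, p2_add, p1_zero, p2_zero]
    ext <;> simp [Quaternion.re_mul, Quaternion.imI_mul, Quaternion.imJ_mul, Quaternion.imK_mul]

lemma anti_2_6 : E 2 * E 6 + E 6 * E 2 = 0 := by
  apply ext_octo <;>
  · rw [eR_2, eR_6]
    simp only [mul_def, p1_mk, p2_mk, p1_add, p2_add, p1_zero, p2_zero]
    ext <;> simp [Quaternion.re_mul, Quaternion.imI_mul, Quaternion.imJ_mul, Quaternion.imK_mul]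

lemma anti_2_7 : E 2 * E 7 + E 7 * E 2 = 0 := by
  apply ext_octo <;>
  · rw [eR_2, eR_7]
    simp only [mul_def, p1_mk, p2_mk, p1_add, p2_add, p1_zero, p2_zero]
    ext <;> simp [Quaternion.re_mul, Quaternion.imI_mul, Quaternion.imJ_mul, Quaternion.imK_mul]

lemma anti_3_4 : E 3 * E 4 + E 4 * E 3 = 0 := by
  apply ext_octo <;>
  · rw [eR_3, eR_4]
    simp only [mul_def, p1_mk, p2_mk, p1_add, p2_add, p1_zero, p2_zero]
    ext <;> simp [Quaternion.re_mul, Quaternion.imI_mul, Quaternion.imJ_mul, Quaternion.imK_mul]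

lemma anti_3_5 : E 3 * E 5 + E 5 * E 3 = 0 := by
  apply ext_octo <;>
  · rw [eR_3, eR_5]
    simp only [mul_def, p1_mk, p2_mk, p1_add, p2_add, p1_zero, p2_zero]
    ext <;> simp [Quaternion.re_mul, Quaternion.imI_mul, Quaternion.imJ_mul, Quaternion.imK_mul]

lemma anti_3_6 : E 3 * E 6 + E 6 * E 3 = 0 := by
  apply ext_octo <;>
  · rw [eR_3, eR_6]
    simp only [mul_def, p1_mk, p2_mk, p1_add, p2_add, p1_zero, p2_zero]
    ext <;> simp [Quaternion.re_mul, Quaternion.imI_mul, Quaternion.imJ_mul, Quaternion.imK_mul]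

lemma anti_3_7 : E 3 * E 7 + E 7 * E 3 = 0 := by
  apply ext_octo <;>
  · rw [eR_3, eR_7]
    simp only [mul_def, p1_mk, p2_mk, p1_add, p2_add, p1_zero, p2_zero]
    ext <;> simp [Quaternion.re_mul, Quaternion.imI_mul, Quaternion.imJ_mul, Quaternion.imK_mul]

lemma anti_4_5 : E 4 * E 5 + E 5 * E 4 = 0 := by
  apply ext_octo <;>
  · rw [eR_4, eR_5]
    simp only [mul_def, p1_mk, p2_mk, p1_add, p2_add, p1_zero, p2_zero]
    ext <;> simp [Quaternion.re_mul, Quaternion.imI_mul, Quaternion.imJ_mul, Quaternion.imK_mul]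

lemma anti_4_6 : E 4 * E 6 + E 6 * E 4 = 0 := by
  apply ext_octo <;>
  · rw [eR_4, eR_6]
    simp only [mul_def, p1_mk, p2_mk, p1_add, p2_add, p1_zero, p2_zero]
    ext <;> simp [Quaternion.re_mul, Quaternion.imI_mul, Quaternion.imJ_mul, Quaternion.imK_mul]

lemma anti_4_7 : E 4 * E 7 + E 7 * E 4 = 0 := by
  apply ext_octo <;>
  · rw [eR_4, eR_7]
    simp only [mul_def, p1_mk, p2_mk, p1_add, p2_add, p1_zero, p2_zero]
    ext <;> simp [Quaternion.re_mul, Quaternion.imI_mul, Quaternion.imJ_mul, Quaternion.imK_mul]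

lemma anti_5_6 : E 5 * E 6 + E 6 * E 5 = 0 := by
  apply ext_octo <;>
  · rw [eR_5, eR_6]
    simp only [mul_def, p1_mk, p2_mk, p1_add, p2_add, p1_zero, p2_zero]
    ext <;> simp [Quaternion.re_mul, Quaternion.imI_mul, Quaternion.imJ_mul, Quaternion.imK_mul]

lemma anti_5_7 : E 5 * E 7 + E 7 * E 5 = 0 := by
  apply ext_octo <;>
  · rw [eR_5, eR_7]
    simp only [mul_def, p1_mk, p2_mk, p1_add, p2_add, p1_zero, p2_zero]
    ext <;> simp [Quaternion.re_mul, Quaternion.imI_mul, Quaternion.imJ_mul, Quaternion.imK_mul]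

lemma anti_6_7 : E 6 * E 7 + E 7 * E 6 = 0 := by
  apply ext_octo <;>
  · rw [eR_6, eR_7]
    simp only [mul_def, p1_mk, p2_mk, p1_add, p2_add, p1_zero, p2_zero]
    ext <;> simp [Quaternion.re_mul, Quaternion.imI_mul, Quaternion.imJ_mul, Quaternion.imK_mul]

lemma e_sq (i : Fin 7) : E i.succ * E i.succ = (-1 : ℝ) • (1 : Octo) := by
  fin_cases i
  exacts [sq_1, sq_2, sq_3, sq_4, sq_5, sq_6, sq_7]

set_option maxHeartbeats 3000000 in
lemma e_anti (i j : Fin 7) (hij : i ≠ j) : E i.succ * E j.succ + E j.succ * E i.succ = 0 := by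
  fin_cases i <;> fin_cases j
  exacts [absurd rfl hij, anti_1_2, anti_1_3, anti_1_4, anti_1_5, anti_1_6, anti_1_7, (by rw [add_comm]; exact anti_1_2), absurd rfl hij, anti_2_3, anti_2_4, anti_2_5, anti_2_6, anti_2_7, (by rw [add_comm]; exact anti_1_3), (by rw [add_comm]; exact anti_2_3), absurd rfl hij, anti_3_4, anti_3_5, anti_3_6, anti_3_7, (by rw [add_comm]; exact anti_1_4), (by rw [add_comm]; exact anti_2_4), (by rw [add_comm]; exact anti_3_4), absurd rfl hij, anti_4_5, anti_4_6, anti_4_7, (by rw [add_comm]; exact anti_1_5), (by rw [add_comm]; exact anti_2_5), (by rw [add_comm]; exact anti_3_5), (by rw [add_comm]; exact anti_4_5), absurd rfl hij, anti_5_6, anti_5_7, (by rw [add_comm]; exact anti_1_6), (by rw [add_comm]; exact anti_2_6), (by rw [add_comm]; exact anti_3_6), (by rw [add_comm]; exact anti_4_6), (by rw [add_comm]; exact anti_5_6), absurd rfl hij, anti_6_7, (by rw [add_comm]; exact anti_1_7), (by rw [add_comm]; exact anti_2_7), (by rw [add_comm]; exact anti_3_7), (by rw [add_comm]; exact anti_4_7),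 (by rw [add_comm]; exact anti_5_7), (by rw [add_comm]; exact anti_6_7), absurd rfl hij]

lemma eR_0 : E 0 = Octo.mk (qq 1 0 0 0) (qq 0 0 0 0) := rfl
lemma e_zero : E 0 = (1 : Octo) := rfl

lemma decomp (p : Octo) : p = (p1 p).re • E 0 + (p1 p).imI • E 1 + (p1 p).imJ • E 2
    + (p1 p).imK • E 3 + (p2 p).re • E 4 + (p2 p).imI • E 5 + (p2 p).imJ • E 6
    + (p2 p).imK • E 7 := by
  apply ext_octo <;>
  · simp only [eR_0, eR_1, eR_2, eR_3, eR_4, eR_5, eR_6, eR_7, p1_add, p2_add,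
      p1_smul, p2_smul, p1_mk, p2_mk]
    ext <;>
      simp [Quaternion.re_smul, Quaternion.imI_smul, Quaternion.imJ_smul, Quaternion.imK_smul,
        smul_eq_mul]

section OModAux

variable {M : Type*} [AddCommGroup M] [Module ℝ M] {sm : Octo → M → M}

lemma sm_zero_left (h : IsOMod sm) (x : M) : sm 0 x = 0 := by
  have := h.real_smul 0 1 x
  simpa using this

lemma sm_zero_right (h : IsOMod sm) (p : Octo) : sm p (0 : M) = 0 := by
  have := h.smul_real 0 p 0
  simpa using this

lemma sm_comm (h : IsOMod sm) (p q : Octo) (x : M) :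
    sm p (sm q x) + sm q (sm p x) = sm (p * q) x + sm (q * p) x := by
  have h1 := h.alt p q x
  rw [neg_sub] at h1
  have h2 := sub_eq_sub_iff_add_eq_add.mp h1
  -- h2 : sm (p*q) x + sm (q*p) x = sm q (sm p x) + sm p (sm q x)
  rw [h2]
  exact add_comm _ _

lemma sm_sq (h : IsOMod sm) (i : Fin 7) (x : M) :
    sm (E i.succ) (sm (E i.succ) x) = -x := by
  have h1 := h.alt (E i.succ) (E i.succ) x
  have h4 := eq_neg_iff_add_eq_zero.mp h1
  have h5 : (2 : ℝ) • (sm (E i.succ * E i.succ) x - sm (E i.succ) (sm (E i.succ) x)) = 0 := by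
    rw [two_smul]; exact h4
  have h6 := (smul_eq_zero.mp h5).resolve_left (by norm_num)
  have h7 := sub_eq_zero.mp h6
  rw [← h7, e_sq i, h.real_smul, h.one_smul, neg_one_smul]

lemma sm_anti (h : IsOMod sm) {i j : Fin 7} (hij : i ≠ j) (x : M) :
    sm (E i.succ) (sm (E j.succ) x) = -sm (E j.succ) (sm (E i.succ) x) := by
  have h1 := sm_comm h (E i.succ) (E j.succ) x
  rw [← h.add_smul, e_anti i j hij, sm_zero_left h] at h1
  exact eq_neg_of_add_eq_zero_left h1

/-- Iterated application of imaginary-unit scalar multiplications. -/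
def Fw (sm : Octo → M → M) (m : M) : List (Fin 7) → M
  | [] => m
  | i :: t => sm (E i.succ) (Fw sm m t)

def baseL : List (Fin 7) := [6, 5, 4, 3, 2, 1, 0]

def Gw (sm : Octo → M → M) (m : M) (s : Finset (Fin 7)) : M :=
  Fw sm m (baseL.filter (· ∈ s))

lemma key (h : IsOMod sm) (m : M) : ∀ l : List (Fin 7), l.Pairwise (· > ·) →
    ∀ j ∈ l, ∀ s : Finset (Fin 7), ∃ c : ℝ,
      sm (E j.succ) (Fw sm m (l.filter (· ∈ s)))
        = c • Fw sm m (l.filter (· ∈ symmDiff s {j})) := by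
  intro l
  induction l with
  | nil => intro _ j hj; simp at hj
  | cons i t ih =>
    intro hp j hj s
    obtain ⟨hgt, hpt⟩ := List.pairwise_cons.mp hp
    have hint : i ∉ t := fun hmem => lt_irrefl i (hgt i hmem)
    have hfc : ∀ s₁ s₂ : Finset (Fin 7), (∀ a ∈ t, (a ∈ s₁) = (a ∈ s₂)) →
        t.filter (· ∈ s₁) = t.filter (· ∈ s₂) := by
      intro s₁ s₂ hss
      refine List.filter_congr ?_
      intro a ha
      simp [hss a ha]
    rcases List.mem_cons.mp hj with hji | hjt
    · subst hji
      by_cases hjs : j ∈ s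
      · have hnj : j ∉ symmDiff s {j} := by simp [Finset.mem_symmDiff, hjs]
        have hf1 : (j :: t).filter (· ∈ s) = j :: t.filter (· ∈ s) := by
          simp [List.filter_cons, hjs]
        have hf2 : (j :: t).filter (· ∈ symmDiff s {j}) = t.filter (· ∈ s) := by
          have ht : t.filter (· ∈ symmDiff s {j}) = t.filter (· ∈ s) :=
            hfc _ _ fun a ha => by
              have : a ≠ j := fun e => hint (e ▸ ha)
              simp [Finset.mem_symmDiff, this, hjs]
          simp [List.filter_cons, hnj, ht]
        refine ⟨-1, ?_⟩
        rw [hf1, hf2]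
        show sm (E j.succ) (sm (E j.succ) (Fw sm m (t.filter (· ∈ s)))) = _
        rw [sm_sq h, neg_one_smul]
      · have hpj : j ∈ symmDiff s {j} := by simp [Finset.mem_symmDiff, hjs]
        have hf1 : (j :: t).filter (· ∈ s) = t.filter (· ∈ s) := by
          simp [List.filter_cons, hjs]
        have hf2 : (j :: t).filter (· ∈ symmDiff s {j}) = j :: t.filter (· ∈ s) := by
          have ht : t.filter (· ∈ symmDiff s {j}) = t.filter (· ∈ s) :=
            hfc _ _ fun a ha => by
              have : a ≠ j := fun e => hint (e ▸ ha)
              simp [Finset.mem_symmDiff, this, hjs]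
          simp [List.filter_cons, hpj, ht]
        refine ⟨1, ?_⟩
        rw [hf1, hf2, one_smul]
        rfl
    · have hne : j ≠ i := fun e => hint (e ▸ hjt)
      obtain ⟨c, hc⟩ := ih hpt j hjt s
      have hiss : i ∈ symmDiff s {j} ↔ i ∈ s := by
        simp [Finset.mem_symmDiff, hne.symm]
      by_cases his : i ∈ s
      · have his' : i ∈ symmDiff s {j} := hiss.mpr his
        have hf1 : (i :: t).filter (· ∈ s) = i :: t.filter (· ∈ s) := by
          simp [List.filter_cons, his]
        have hf2 : (i :: t).filter (· ∈ symmDiff s {j}) = i :: t.filter (· ∈ symmDiff s {j}) := by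
          simp [List.filter_cons, his']
        refine ⟨-c, ?_⟩
        rw [hf1, hf2]
        show sm (E j.succ) (sm (E i.succ) (Fw sm m (t.filter (· ∈ s))))
          = (-c) • sm (E i.succ) (Fw sm m (t.filter (· ∈ symmDiff s {j})))
        rw [sm_anti h hne, hc, h.smul_real, neg_smul]
      · have his' : i ∉ symmDiff s {j} := fun hh => his (hiss.mp hh)
        have hf1 : (i :: t).filter (· ∈ s) = t.filter (· ∈ s) := by
          simp [List.filter_cons, his]
        have hf2 : (i :: t).filter (· ∈ symmDiff s {j}) = t.filter (· ∈ symmDiff s {j}) := by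
          simp [List.filter_cons, his']
        exact ⟨c, by rw [hf1, hf2]; exact hc⟩

def Ws (sm : Octo → M → M) (m : M) : Submodule ℝ M :=
  Submodule.span ℝ (Set.range (Gw sm m))

lemma stepE (h : IsOMod sm) (m : M) (i : Fin 7) :
    ∀ x ∈ Ws sm m, sm (E i.succ) x ∈ Ws sm m := by
  intro x hx
  induction hx using Submodule.span_induction with
  | mem x hxg =>
    obtain ⟨s, rfl⟩ := hxg
    obtain ⟨c, hc⟩ := key h m baseL (by decide) i (by revert i; decide) s
    rw [show Gw sm m s = Fw sm m (baseL.filter (· ∈ s)) from rfl, hc]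
    exact Submodule.smul_mem _ _ (Submodule.subset_span ⟨_, rfl⟩)
  | zero => rw [sm_zero_right h]; exact Submodule.zero_mem _
  | add a b _ _ ha hb => rw [h.smul_add]; exact Submodule.add_mem _ ha hb
  | smul r a _ ha => rw [h.smul_real]; exact Submodule.smul_mem _ _ ha

lemma stepAll (h : IsOMod sm) (m : M) (p : Octo) :
    ∀ x ∈ Ws sm m, sm p x ∈ Ws sm m := by
  intro x hx
  have h0 : sm (E 0) x ∈ Ws sm m := by
    rw [e_zero, h.one_smul]; exact hx
  rw [decomp p]
  simp only [h.add_smul, h.real_smul]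
  refine Submodule.add_mem _ (Submodule.add_mem _ (Submodule.add_mem _ (Submodule.add_mem _
    (Submodule.add_mem _ (Submodule.add_mem _ (Submodule.add_mem _
      (Submodule.smul_mem _ _ h0)
      (Submodule.smul_mem _ _ (stepE h m 0 x hx)))
      (Submodule.smul_mem _ _ (stepE h m 1 x hx)))
      (Submodule.smul_mem _ _ (stepE h m 2 x hx)))
      (Submodule.smul_mem _ _ (stepE h m 3 x hx)))
      (Submodule.smul_mem _ _ (stepE h m 4 x hx)))
      (Submodule.smul_mem _ _ (stepE h m 5 x hx)))
      (Submodule.smul_mem _ _ (stepE h m 6 x hx))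

lemma m_mem (sm : Octo → M → M) (m : M) : m ∈ Ws sm m := by
  have : Gw sm m ∅ = m := by
    simp [Gw, Fw, List.filter_eq_nil_iff]
  exact this ▸ Submodule.subset_span ⟨∅, rfl⟩

end OModAux



end Stmt16Aux

/-- The submodule generated by a single element is finite-dimensional over ℝ,
of dimension at most `128`. -/
theorem stmt16 {M : Type*} [AddCommGroup M] [Module ℝ M]
    (sm : Octo → M → M) (h : IsOMod sm) (m : M) :
    FiniteDimensional ℝ (genSubmodule sm m) ∧
      Module.finrank ℝ (genSubmodule sm m) ≤ 128 := by
  classical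
  have hsub : IsOSubmodule sm (↑(Stmt16Aux.Ws sm m) : Set M) :=
    { zero_mem := Submodule.zero_mem _
      add_mem := fun hx hy => Submodule.add_mem _ hx hy
      smul_mem := fun r _ hx => Submodule.smul_mem _ r hx
      osmul_mem := fun p _ hx => Stmt16Aux.stepAll h m p _ hx }
  have hle : genSubmodule sm m ≤ Stmt16Aux.Ws sm m := by
    intro x hx
    exact Set.mem_sInter.mp hx _ ⟨hsub, Stmt16Aux.m_mem sm m⟩
  haveI hfd : FiniteDimensional ℝ (Stmt16Aux.Ws sm m) :=
    FiniteDimensional.span_of_finite ℝ (Set.finite_range _)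
  haveI hfd2 : FiniteDimensional ℝ (genSubmodule sm m) :=
    Submodule.finiteDimensional_of_le hle
  refine ⟨hfd2, ?_⟩
  calc Module.finrank ℝ (genSubmodule sm m)
      ≤ Module.finrank ℝ (Stmt16Aux.Ws sm m) := Submodule.finrank_mono hle
    _ ≤ Fintype.card (Finset (Fin 7)) := finrank_range_le_card _
    _ ≤ 128 := by rw [Fintype.card_finset]; norm_num
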